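/- Let Ω ⊆ ℝⁿ be open and let u : Ω → ℝ be a C³ function satisfying the non-divergence form minimal surface equation Σ_{i,j} g^{ij} u_{ij} = 0 on Ω, where v = √(1+|∇u|²), ν = ∇u/v and g^{ij} = δ^{ij} − ν^i ν^j. Then at every point of Ω, Σ_{i,j,k} g^{ij} u_{ijk} ν^k = (2/v)·Σ_{i,j} g^{ij} v_i v_j, where v_i denotes the partial derivatives of v and u_{ijk} the third partial derivatives of u. -/

import Mathlib

open scoped BigOperators

/-- The partial derivative `∂f/∂xᵢ` of a function on Euclidean space. -/
noncomputable def pd {n : ℕ} (i : Fin n) (f : EuclideanSpace ℝ (Fin n) → ℝ)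
    (x : EuclideanSpace ℝ (Fin n)) : ℝ :=
  fderiv ℝ f x (EuclideanSpace.single i 1)

/-- `v = √(1 + |∇u|²)`. -/
noncomputable def vGrad {n : ℕ} (u : EuclideanSpace ℝ (Fin n) → ℝ)
    (x : EuclideanSpace ℝ (Fin n)) : ℝ :=
  Real.sqrt (1 + ∑ i, (pd i u x) ^ 2)

/-- `νⁱ = uᵢ / v`. -/
noncomputable def nuVec {n : ℕ} (u : EuclideanSpace ℝ (Fin n) → ℝ) (i : Fin n)
    (x : EuclideanSpace ℝ (Fin n)) : ℝ :=
  pd i u x / vGrad u x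

/-- `gⁱʲ = δⁱʲ − νⁱ νʲ`. -/
noncomputable def gIJ {n : ℕ} (u : EuclideanSpace ℝ (Fin n) → ℝ) (i j : Fin n)
    (x : EuclideanSpace ℝ (Fin n)) : ℝ :=
  (if i = j then (1 : ℝ) else 0) - nuVec u i x * nuVec u j x

lemma contDiffAt_pd {n : ℕ} {f : EuclideanSpace ℝ (Fin n) → ℝ} {x : EuclideanSpace ℝ (Fin n)}
    {m k : WithTop ℕ∞} (hf : ContDiffAt ℝ k f x) (hmk : m + 1 ≤ k) (j : Fin n) :
    ContDiffAt ℝ m (pd j f) x :=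
  (hf.fderiv_right hmk).clm_apply contDiffAt_const

lemma pd_symm {n : ℕ} {f : EuclideanSpace ℝ (Fin n) → ℝ} {x : EuclideanSpace ℝ (Fin n)}
    (hf : ContDiffAt ℝ 2 f x) (a b : Fin n) :
    pd a (pd b f) x = pd b (pd a f) x := by
  have hd : DifferentiableAt ℝ (fderiv ℝ f) x :=
    (hf.fderiv_right (m := 1) (by norm_num)).differentiableAt (by norm_num)
  have key : ∀ c d : Fin n, pd c (pd d f) x
      = fderiv ℝ (fderiv ℝ f) x (EuclideanSpace.single c 1) (EuclideanSpace.single d 1) := by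
    intro c d
    have h1 : pd d f = fun y => fderiv ℝ f y (EuclideanSpace.single d 1) := rfl
    rw [pd, h1, fderiv_clm_apply hd (differentiableAt_const _)]
    simp
  rw [key a b, key b a, hf.isSymmSndFDerivAt (by norm_num) _ _]




lemma alg {n : ℕ} {V : ℝ} (hV : V ≠ 0) (p ν w : Fin n → ℝ) (q m : Fin n → Fin n → ℝ)
    (c : Fin n → Fin n → Fin n → ℝ) (G : Fin n → Fin n → ℝ) (r : Fin n → Fin n → Fin n → ℝ)
    (hν : ∀ i, ν i = p i / V)
    (hw : ∀ k, ∑ j, p j * q k j = V * w k)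
    (hm : ∀ k i, m k i = q k i / V - p i * w k / V ^ 2)
    (hc : ∀ k i j, c k i j = -(ν i * m k j + ν j * m k i))
    (hG : ∀ i j, G i j = (if i = j then (1 : ℝ) else 0) - ν i * ν j)
    (hq : ∀ i j, q i j = q j i)
    (hE : ∀ k, ∑ i, ∑ j, G i j * r i j k = -∑ i, ∑ j, q i j * c k i j) :
    ∑ i, ∑ j, ∑ k, G i j * r i j k * ν k = 2 / V * ∑ i, ∑ j, G i j * w i * w j := by
  classical
  set T := ∑ i, p i * w i with hT
  set S2 := ∑ i, w i * w i with hS2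
  -- ∑_j q i j * ν j = w i
  have hsw : ∀ i, ∑ j, q i j * ν j = w i := by
    intro i
    have h1 : ∑ j, q i j * ν j = (∑ j, p j * q i j) / V := by
      rw [Finset.sum_div]
      exact Finset.sum_congr rfl fun j _ => by rw [hν]; ring
    rw [h1, hw i]
    field_simp
  have hsw3 : ∀ j, ∑ i, q i j * ν i = w j := by
    intro j
    rw [← hsw j]
    exact Finset.sum_congr rfl fun i _ => by rw [hq]
  -- ∑_k p k * q k i = V * w i
  have hw2 : ∀ i, ∑ k, p k * q k i = V * w i := by
    intro i
    rw [← hw i]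
    exact Finset.sum_congr rfl fun k _ => by rw [hq]
  -- key identity from hE
  have key : ∀ k, ∑ i, ∑ j, G i j * r i j k = 2 * ∑ i, m k i * w i := by
    intro k
    rw [hE k]
    have h2 : ∑ i, ∑ j, q i j * c k i j
        = -∑ i, ∑ j, (q i j * ν i * m k j + q i j * ν j * m k i) := by
      rw [← Finset.sum_neg_distrib]
      refine Finset.sum_congr rfl fun i _ => ?_
      rw [← Finset.sum_neg_distrib]
      refine Finset.sum_congr rfl fun j _ => ?_
      rw [hc]; ring
    rw [h2, neg_neg]
    have h3 : ∑ i, ∑ j, (q i j * ν i * m k j + q i j * ν j * m k i)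
        = (∑ i, ∑ j, q i j * ν i * m k j) + ∑ i, ∑ j, q i j * ν j * m k i := by
      simp [Finset.sum_add_distrib]
    rw [h3]
    have hA : ∑ i, ∑ j, q i j * ν i * m k j = ∑ j, m k j * w j := by
      rw [Finset.sum_comm]
      refine Finset.sum_congr rfl fun j _ => ?_
      rw [← hsw3 j, Finset.mul_sum]
      exact Finset.sum_congr rfl fun i _ => by ring
    have hB : ∑ i, ∑ j, q i j * ν j * m k i = ∑ i, m k i * w i := by
      refine Finset.sum_congr rfl fun i _ => ?_
      rw [← hsw i, Finset.mul_sum]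
      exact Finset.sum_congr rfl fun j _ => by ring
    rw [hA, hB, two_mul]
  -- expand m inside ∑ i m k i w i
  have hmw : ∀ k, ∑ i, m k i * w i = (∑ i, q k i * w i) / V - w k * T / V ^ 2 := by
    intro k
    have : ∀ i, m k i * w i = q k i * w i / V - p i * w i * (w k / V ^ 2) := by
      intro i; rw [hm]; ring
    rw [Finset.sum_congr rfl fun i _ => this i, Finset.sum_sub_distrib, ← Finset.sum_div,
      ← Finset.sum_mul, hT]
    ring
  -- ∑ k p k * (∑ i q k i w i) = V * S2
  have hU : ∑ k, p k * ∑ i, q k i * w i = V * S2 := by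
    have h1 : ∑ k, p k * ∑ i, q k i * w i = ∑ k, ∑ i, p k * q k i * w i := by
      refine Finset.sum_congr rfl fun k _ => ?_
      rw [Finset.mul_sum]
      exact Finset.sum_congr rfl fun i _ => by ring
    rw [h1, Finset.sum_comm]
    have h2 : ∀ i, ∑ k, p k * q k i * w i = V * (w i * w i) := by
      intro i
      rw [← Finset.sum_mul, hw2 i]; ring
    rw [Finset.sum_congr rfl fun i _ => h2 i, ← Finset.mul_sum, hS2]
  -- LHS reduction
  have hLHS : ∑ i, ∑ j, ∑ k, G i j * r i j k * ν k
      = 2 / V ^ 2 * (V * S2) - 2 * T / V ^ 3 * T := by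
    have h1 : ∑ i, ∑ j, ∑ k, G i j * r i j k * ν k
        = ∑ k, (∑ i, ∑ j, G i j * r i j k) * ν k := by
      rw [show ∑ i, ∑ j, ∑ k, G i j * r i j k * ν k
          = ∑ i, ∑ k, ∑ j, G i j * r i j k * ν k from
        Finset.sum_congr rfl fun i _ => Finset.sum_comm, Finset.sum_comm]
      refine Finset.sum_congr rfl fun k _ => ?_
      rw [Finset.sum_mul]
      exact Finset.sum_congr rfl fun i _ => by rw [Finset.sum_mul]
    rw [h1]
    have h2 : ∀ k, (∑ i, ∑ j, G i j * r i j k) * ν k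
        = 2 / V ^ 2 * (p k * ∑ i, q k i * w i) - 2 * T / V ^ 3 * (p k * w k) := by
      intro k
      rw [key k, hmw k, hν k]; ring
    rw [Finset.sum_congr rfl fun k _ => h2 k, Finset.sum_sub_distrib, ← Finset.mul_sum,
      ← Finset.mul_sum, hU, hT]
  -- RHS reduction
  have hRHS : ∑ i, ∑ j, G i j * w i * w j = S2 - T * T / V ^ 2 := by
    have h1 : ∀ i j, G i j * w i * w j
        = (if i = j then w i * w j else 0) - p i * w i * (p j * w j) / V ^ 2 := by
      intro i j
      rw [hG, hν, hν]
      split_ifs <;> ring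
    rw [Finset.sum_congr rfl fun i _ => Finset.sum_congr rfl fun j _ => h1 i j]
    have h2 : ∀ i, ∑ j, ((if i = j then w i * w j else 0) - p i * w i * (p j * w j) / V ^ 2)
        = w i * w i - p i * w i * T / V ^ 2 := by
      intro i
      rw [Finset.sum_sub_distrib, Finset.sum_ite_eq]
      simp only [Finset.mem_univ, if_true]
      congr 1
      rw [← Finset.sum_div, ← Finset.mul_sum, hT]
    rw [Finset.sum_congr rfl fun i _ => h2 i, Finset.sum_sub_distrib, hS2]
    congr 1
    rw [← Finset.sum_div, ← Finset.sum_mul, ← hT]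
  rw [hLHS, hRHS]
  field_simp

/-- The paper's identities (5)–(6) combined (Euclidean case): if `u` is a `C³` solution
of the non-divergence form minimal surface equation `Σ gⁱʲ uᵢⱼ = 0` on an open set
`Ω ⊆ ℝⁿ`, then `Σ gⁱʲ uᵢⱼₖ νᵏ = (2/v) Σ gⁱʲ vᵢ vⱼ` at every point of `Ω`. -/
theorem third_derivative_contraction_identity (n : ℕ) (Ω : Set (EuclideanSpace ℝ (Fin n)))
    (hΩ : IsOpen Ω) (u : EuclideanSpace ℝ (Fin n) → ℝ) (hu : ContDiffOn ℝ 3 u Ω)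
    (hmse : ∀ x ∈ Ω, ∑ i, ∑ j, gIJ u i j x * pd i (pd j u) x = 0) :
    ∀ x ∈ Ω,
      ∑ i, ∑ j, ∑ k, gIJ u i j x * pd i (pd j (pd k u)) x * nuVec u k x
        = (2 / vGrad u x) * ∑ i, ∑ j, gIJ u i j x * pd i (vGrad u) x * pd j (vGrad u) x := by
  intro x hx
  classical
  have hmse' := hmse

  classical
  have hxo : Ω ∈ nhds x := hΩ.mem_nhds hx
  have hu3 : ContDiffAt ℝ 3 u x := hu.contDiffAt hxo
  have hq2 : ∀ j, ContDiffAt ℝ 2 (pd j u) x :=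
    fun j => contDiffAt_pd hu3 (by norm_num) j
  have hd1 : ∀ j, DifferentiableAt ℝ (pd j u) x :=
    fun j => (hq2 j).differentiableAt (by norm_num)
  have hd2 : ∀ i j, DifferentiableAt ℝ (pd i (pd j u)) x :=
    fun i j => (contDiffAt_pd (m := 1) (hq2 j) (by norm_num) i).differentiableAt (by norm_num)
  have hs : (0:ℝ) < 1 + ∑ i, pd i u x ^ 2 := by positivity
  have hV0 : 0 < vGrad u x := Real.sqrt_pos.mpr hs
  have hVne : vGrad u x ≠ 0 := ne_of_gt hV0
  -- derivative of vGrad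
  have hsum : HasFDerivAt (fun y => 1 + ∑ i, pd i u y ^ 2)
      (∑ i : Fin n, ((2 * pd i u x) • fderiv ℝ (pd i u) x)) x := by
    have h1 : ∀ i : Fin n, HasFDerivAt (fun y => pd i u y ^ 2)
        ((2 * pd i u x) • fderiv ℝ (pd i u) x) x := by
      intro i
      have h2 := ((hd1 i).hasFDerivAt).mul ((hd1 i).hasFDerivAt)
      have h3 : (fun y => pd i u y ^ 2) = fun y => pd i u y * pd i u y := by
        funext y; ring
      rw [h3, two_mul, add_smul]
      exact h2
    exact (HasFDerivAt.fun_sum (fun i _ => h1 i)).const_add 1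
  have hVd : HasFDerivAt (vGrad u)
      ((1 / (2 * vGrad u x)) • ∑ i : Fin n, ((2 * pd i u x) • fderiv ℝ (pd i u) x)) x :=
    hsum.sqrt (ne_of_gt hs)
  have hVdiff : DifferentiableAt ℝ (vGrad u) x := hVd.differentiableAt
  -- value of pd k (vGrad u) x
  have hwval : ∀ k, ∑ j, pd j u x * pd k (pd j u) x = vGrad u x * pd k (vGrad u) x := by
    intro k
    have h1 : pd k (vGrad u) x
        = (1 / (2 * vGrad u x)) * ∑ i, (2 * pd i u x) * pd k (pd i u) x := by
      show fderiv ℝ (vGrad u) x (EuclideanSpace.single k 1) = _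
      rw [hVd.fderiv]
      simp only [ContinuousLinearMap.smul_apply, ContinuousLinearMap.sum_apply, smul_eq_mul]
      rfl
    have h2 : ∑ i, (2 * pd i u x) * pd k (pd i u) x
        = 2 * ∑ j, pd j u x * pd k (pd j u) x := by
      rw [Finset.mul_sum]
      exact Finset.sum_congr rfl fun i _ => by ring
    rw [h1, h2]
    field_simp
  -- derivative of nuVec
  have hinv : HasFDerivAt (fun y => (vGrad u y)⁻¹)
      ((-((vGrad u x) ^ 2)⁻¹) • fderiv ℝ (vGrad u) x) x :=
    (hasDerivAt_inv hVne).comp_hasFDerivAt x hVdiff.hasFDerivAt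
  have hnud : ∀ i, HasFDerivAt (nuVec u i)
      (pd i u x • ((-((vGrad u x) ^ 2)⁻¹) • fderiv ℝ (vGrad u) x)
        + (vGrad u x)⁻¹ • fderiv ℝ (pd i u) x) x := by
    intro i
    have h := (hd1 i).hasFDerivAt.mul hinv
    have h2 : nuVec u i = fun y => pd i u y * (vGrad u y)⁻¹ := by
      funext y; simp [nuVec, div_eq_mul_inv]
    rw [h2]
    exact h
  have hnudiff : ∀ i, DifferentiableAt ℝ (nuVec u i) x := fun i => (hnud i).differentiableAt
  have hmval : ∀ k i, pd k (nuVec u i) x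
      = pd k (pd i u) x / vGrad u x - pd i u x * pd k (vGrad u) x / (vGrad u x) ^ 2 := by
    intro k i
    have h1 : pd k (nuVec u i) x
        = pd i u x * ((-((vGrad u x) ^ 2)⁻¹) * pd k (vGrad u) x)
          + (vGrad u x)⁻¹ * pd k (pd i u) x := by
      show fderiv ℝ (nuVec u i) x (EuclideanSpace.single k 1) = _
      rw [(hnud i).fderiv]
      simp only [ContinuousLinearMap.add_apply, ContinuousLinearMap.smul_apply, smul_eq_mul]
      rfl
    rw [h1]
    field_simp
    ring
  -- derivative of gIJ
  have hgd : ∀ i j, HasFDerivAt (gIJ u i j)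
      (0 - (nuVec u i x • fderiv ℝ (nuVec u j) x + nuVec u j x • fderiv ℝ (nuVec u i) x)) x := by
    intro i j
    have h := ((hnudiff i).hasFDerivAt).mul ((hnudiff j).hasFDerivAt)
    have h2 : gIJ u i j = fun y => (if i = j then (1:ℝ) else 0) - nuVec u i y * nuVec u j y := rfl
    rw [h2]
    exact (hasFDerivAt_const _ _).sub h
  have hgdiff : ∀ i j, DifferentiableAt ℝ (gIJ u i j) x := fun i j => (hgd i j).differentiableAt
  have hcval : ∀ k i j, pd k (gIJ u i j) x
      = -(nuVec u i x * pd k (nuVec u j) x + nuVec u j x * pd k (nuVec u i) x) := by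
    intro k i j
    show fderiv ℝ (gIJ u i j) x (EuclideanSpace.single k 1) = _
    rw [(hgd i j).fderiv]
    simp only [ContinuousLinearMap.sub_apply, ContinuousLinearMap.zero_apply,
      ContinuousLinearMap.add_apply, ContinuousLinearMap.smul_apply, smul_eq_mul, zero_sub]
    rfl
  -- differentiated equation
  have hFd : HasFDerivAt (fun y => ∑ i, ∑ j, gIJ u i j y * pd i (pd j u) y)
      (∑ i : Fin n, ∑ j : Fin n, (gIJ u i j x • fderiv ℝ (pd i (pd j u)) x
        + pd i (pd j u) x • fderiv ℝ (gIJ u i j) x)) x :=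
    HasFDerivAt.fun_sum fun i _ => HasFDerivAt.fun_sum fun j _ =>
      ((hgdiff i j).hasFDerivAt.mul (hd2 i j).hasFDerivAt)
  have hF0 : fderiv ℝ (fun y => ∑ i, ∑ j, gIJ u i j y * pd i (pd j u) y) x = 0 := by
    have he : (fun y => ∑ i, ∑ j, gIJ u i j y * pd i (pd j u) y) =ᶠ[nhds x] (fun _ => (0:ℝ)) := by
      filter_upwards [hxo] with y hy using hmse y hy
    rw [he.fderiv_eq]
    exact fderiv_const_apply 0
  have hA0 : (∑ i : Fin n, ∑ j : Fin n, (gIJ u i j x • fderiv ℝ (pd i (pd j u)) x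
        + pd i (pd j u) x • fderiv ℝ (gIJ u i j) x)) = 0 := hFd.fderiv.symm.trans hF0
  have hEk : ∀ k, ∑ i, ∑ j, (gIJ u i j x * pd k (pd i (pd j u)) x
      + pd i (pd j u) x * pd k (gIJ u i j) x) = 0 := by
    intro k
    have h := congrArg (fun L : EuclideanSpace ℝ (Fin n) →L[ℝ] ℝ =>
      L (EuclideanSpace.single k 1)) hA0
    simp only [ContinuousLinearMap.sum_apply, ContinuousLinearMap.add_apply,
      ContinuousLinearMap.smul_apply, smul_eq_mul, ContinuousLinearMap.zero_apply] at h
    exact h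
  -- symmetry of derivatives
  have hq2y : ∀ y ∈ Ω, ContDiffAt ℝ 2 u y :=
    fun y hy => (hu.contDiffAt (hΩ.mem_nhds hy)).of_le (by norm_num)
  have hqsym : ∀ i j, pd i (pd j u) x = pd j (pd i u) x :=
    fun i j => pd_symm (hq2y x hx) i j
  have hsym3 : ∀ i j k : Fin n, pd k (pd i (pd j u)) x = pd i (pd j (pd k u)) x := by
    intro i j k
    have h1 : pd k (pd i (pd j u)) x = pd i (pd k (pd j u)) x := pd_symm (hq2 j) k i
    have h2 : pd i (pd k (pd j u)) x = pd i (pd j (pd k u)) x := by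
      have he : (pd k (pd j u)) =ᶠ[nhds x] (pd j (pd k u)) := by
        filter_upwards [hxo] with y hy using pd_symm (hq2y y hy) k j
      show fderiv ℝ (pd k (pd j u)) x (EuclideanSpace.single i 1)
          = fderiv ℝ (pd j (pd k u)) x (EuclideanSpace.single i 1)
      rw [he.fderiv_eq]
    rw [h1, h2]
  have hE : ∀ k, ∑ i, ∑ j, gIJ u i j x * pd i (pd j (pd k u)) x
      = -∑ i, ∑ j, pd i (pd j u) x * pd k (gIJ u i j) x := by
    intro k
    have h2 : ∑ i, ∑ j, (gIJ u i j x * pd i (pd j (pd k u)) x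
        + pd i (pd j u) x * pd k (gIJ u i j) x) = 0 := by
      refine Eq.trans ?_ (hEk k)
      refine Finset.sum_congr rfl fun i _ => Finset.sum_congr rfl fun j _ => ?_
      rw [← hsym3 i j k]
    simp only [Finset.sum_add_distrib] at h2
    linarith
  exact alg (V := vGrad u x) hVne (fun i => pd i u x) (fun i => nuVec u i x)
    (fun k => pd k (vGrad u) x) (fun i j => pd i (pd j u) x) (fun k i => pd k (nuVec u i) x)
    (fun k i j => pd k (gIJ u i j) x) (fun i j => gIJ u i j x)
    (fun i j k => pd i (pd j (pd k u)) x)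
    (fun i => rfl) hwval hmval hcval (fun i j => rfl) hqsym hE
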